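/- Let σ : ℝ → ℝ be a polynomial, s ∈ ℝ, z ∈ ℝⁿ, and set y = σ(∑_{j∈N} z_j + s), ỹ = σ(s). Let N⁺ = {j : z_j > 0} and N⁻ = {j : z_j ≤ 0}, and assume ∑_{j ∈ N⁺} z_j ≠ 0. Then for every i ∈ N⁺, the Deep Taylor attribution a_i = (z_i / ∑_{j∈N⁺} z_j) · (y − ỹ) satisfies a_i = ∑_{κ ∈ Ω_i} φ(κ) + ∑_{S ⊆ N, |S| > 1, i ∈ S} ∑_{κ ∈ Ω_S} (κ_i / ∑_{j∈N⁺} κ_j) · I(κ) + ∑_{∅ ≠ S ⊆ N⁻} ∑_{κ ∈ Ω_S} (z_i / ∑_{j∈N⁺} z_j) · I(κ); moreover the Deep Taylor attribution of every i ∈ N⁻ is 0. -/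

import Mathlib

open Finset

/-- The Taylor interaction effect `I(κ)` of the one-layer module
`g(u) = σ(∑ⱼ uⱼ + s)` expanded at the baseline `0` and evaluated at `z`:
`I(κ) = (σ^{(|κ|)}(s)/|κ|!) · (|κ|!/∏ⱼ κⱼ!) · ∏ⱼ zⱼ^{κⱼ}`. -/
noncomputable def taylorEffect {n : ℕ} (σ : Polynomial ℝ) (s : ℝ) (z : Fin n → ℝ)
    (κ : Fin n → ℕ) : ℝ :=
  ((Polynomial.derivative^[∑ j, κ j] σ).eval s / ((∑ j, κ j).factorial : ℝ)) *
    ((Nat.multinomial Finset.univ κ : ℕ) : ℝ) * ∏ j, z j ^ κ j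

/-- The Deep Taylor attribution of input `i` for the module `g(u) = σ(∑ⱼ uⱼ + s)`:
`aᵢ = (zᵢ/∑_{j∈N⁺} zⱼ)·(y − ỹ)` for `i ∈ N⁺` and `aᵢ = 0` for `i ∈ N⁻`. -/
noncomputable def deepTaylorAttr {n : ℕ} (σ : Polynomial ℝ) (s : ℝ) (z : Fin n → ℝ)
    (i : Fin n) : ℝ :=
  if 0 < z i then
    (z i / ∑ j ∈ univ.filter (fun j => 0 < z j), z j) *
      (σ.eval (∑ j, z j + s) - σ.eval s)
  else 0

section
variable {n : ℕ}

lemma dt_coeff (σ : Polynomial ℝ) (s : ℝ) (m : ℕ) :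
    (Polynomial.taylor s σ).coeff m = (Polynomial.derivative^[m] σ).eval s / m.factorial := by
  rw [Polynomial.taylor_coeff]
  have h : (Polynomial.derivative^[m] σ) = m.factorial • (Polynomial.hasseDeriv m σ) := by
    rw [← Polynomial.factorial_smul_hasseDeriv]; rfl
  rw [h]
  simp [Polynomial.eval_smul, nsmul_eq_mul]
  field_simp [Nat.factorial_ne_zero]

lemma dt_eval_add (σ : Polynomial ℝ) (s x : ℝ) :
    σ.eval (x + s) = ∑ m ∈ range (σ.natDegree + 1),
      (Polynomial.derivative^[m] σ).eval s / m.factorial * x ^ m := by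
  rw [← Polynomial.taylor_eval s σ x, Polynomial.eval_eq_sum_range, Polynomial.natDegree_taylor]
  exact Finset.sum_congr rfl fun m _ => by rw [dt_coeff]


lemma dt_cast_multinomial (κ : Fin n → ℕ) :
    ((Nat.multinomial univ κ : ℕ) : ℝ)
      = ((∑ j, κ j).factorial : ℝ) / ∏ j, ((κ j).factorial : ℝ) := by
  have h := Nat.multinomial_spec univ κ
  have hpos : (0:ℝ) < ∏ j, ((κ j).factorial : ℝ) := by positivity
  rw [eq_div_iff hpos.ne']
  exact_mod_cast (mul_comm _ _).trans h

lemma dt_sum3 {M : Type*} [AddCommMonoid M] {T : Finset (Fin n)} {i j : Fin n}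
    (hi : i ∈ T) (hj : j ∈ T) (hij : i ≠ j) (g : Fin n → M) :
    ∑ l ∈ T, g l = g i + g j + ∑ l ∈ (T.erase i).erase j, g l := by
  rw [← Finset.add_sum_erase _ _ hi,
    ← Finset.add_sum_erase _ _ (Finset.mem_erase.mpr ⟨hij.symm, hj⟩), add_assoc]

lemma dt_prod3 {M : Type*} [CommMonoid M] {T : Finset (Fin n)} {i j : Fin n}
    (hi : i ∈ T) (hj : j ∈ T) (hij : i ≠ j) (g : Fin n → M) :
    ∏ l ∈ T, g l = g i * g j * ∏ l ∈ (T.erase i).erase j, g l := by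
  rw [← Finset.mul_prod_erase _ _ hi,
    ← Finset.mul_prod_erase _ _ (Finset.mem_erase.mpr ⟨hij.symm, hj⟩), mul_assoc]

/-- the exponent move κ ↦ κ - e_i + e_j -/
def dtMove (i j : Fin n) (κ : Fin n → ℕ) : Fin n → ℕ :=
  fun l => if l = i then κ i - 1 else if l = j then κ j + 1 else κ l

variable {i j : Fin n} {κ : Fin n → ℕ}

lemma dtMove_i (hij : i ≠ j) : dtMove i j κ i = κ i - 1 := by simp [dtMove]
lemma dtMove_j (hij : i ≠ j) : dtMove i j κ j = κ j + 1 := by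
  simp [dtMove, hij.symm]
lemma dtMove_other (hli : l ≠ i) (hlj : l ≠ j) : dtMove i j κ l = κ l := by
  simp [dtMove, hli, hlj]

lemma dtMove_sum {T : Finset (Fin n)} (hi : i ∈ T) (hj : j ∈ T) (hij : i ≠ j)
    (hκ : κ i ≠ 0) : ∑ l ∈ T, dtMove i j κ l = ∑ l ∈ T, κ l := by
  rw [dt_sum3 hi hj hij, dt_sum3 hi hj hij κ, dtMove_i hij, dtMove_j hij]
  have : ∑ l ∈ (T.erase i).erase j, dtMove i j κ l = ∑ l ∈ (T.erase i).erase j, κ l := by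
    refine Finset.sum_congr rfl fun l hl => ?_
    rw [Finset.mem_erase, Finset.mem_erase] at hl
    exact dtMove_other hl.2.1 hl.1
  rw [this]
  omega

lemma dtMove_inv (hij : i ≠ j) (hκ : κ i ≠ 0) : dtMove j i (dtMove i j κ) = κ := by
  funext l
  by_cases hli : l = i
  · rw [hli, dtMove_j hij.symm, dtMove_i hij]
    omega
  · by_cases hlj : l = j
    · rw [hlj, dtMove_i hij.symm, dtMove_j hij]
      omega
    · rw [dtMove_other hlj hli, dtMove_other hli hlj]
lemma dtMove_mult (hij : i ≠ j) (hκ : κ i ≠ 0) :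
    (κ i : ℝ) * (Nat.multinomial univ κ : ℝ)
      = ((κ j : ℝ) + 1) * (Nat.multinomial univ (dtMove i j κ) : ℝ) := by
  have hiu : i ∈ (univ : Finset (Fin n)) := mem_univ i
  have hju : j ∈ (univ : Finset (Fin n)) := mem_univ j
  have hsum : ∑ l, dtMove i j κ l = ∑ l, κ l := dtMove_sum hiu hju hij hκ
  rw [dt_cast_multinomial, dt_cast_multinomial, hsum]
  have hR : ∏ l ∈ (univ.erase i).erase j, (((dtMove i j κ) l).factorial : ℝ)
      = ∏ l ∈ (univ.erase i).erase j, ((κ l).factorial : ℝ) := by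
    refine Finset.prod_congr rfl fun l hl => ?_
    rw [Finset.mem_erase, Finset.mem_erase] at hl
    rw [dtMove_other hl.2.1 hl.1]
  rw [dt_prod3 hiu hju hij (fun l => ((κ l).factorial : ℝ)),
    dt_prod3 hiu hju hij (fun l => (((dtMove i j κ) l).factorial : ℝ)), hR,
    dtMove_i hij, dtMove_j hij]
  set R := ∏ l ∈ (univ.erase i).erase j, ((κ l).factorial : ℝ) with hRdef
  have hRpos : (0:ℝ) < R := by rw [hRdef]; positivity
  have key : (κ i) * ((κ i - 1).factorial * (κ j + 1).factorial)
      = (κ j + 1) * ((κ i).factorial * (κ j).factorial) := by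
    rw [Nat.factorial_succ, ← Nat.mul_factorial_pred hκ]
    ring
  have key' : (κ i : ℝ) * (((κ i - 1).factorial :ℝ) * ((κ j + 1).factorial:ℝ))
      = ((κ j:ℝ) + 1) * (((κ i).factorial:ℝ) * ((κ j).factorial:ℝ)) := by
    exact_mod_cast key
  have h1 : ((κ i).factorial : ℝ) ≠ 0 := by positivity
  have h2 : ((κ j).factorial : ℝ) ≠ 0 := by positivity
  have h3 : ((κ i - 1).factorial : ℝ) ≠ 0 := by positivity
  have h4 : ((κ j + 1).factorial : ℝ) ≠ 0 := by positivity
  field_simp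
  linear_combination key'

lemma dtMove_pow (z : Fin n → ℝ) (hij : i ≠ j) (hκ : κ i ≠ 0) :
    z j * ∏ l, z l ^ κ l = z i * ∏ l, z l ^ (dtMove i j κ) l := by
  have hiu : i ∈ (univ : Finset (Fin n)) := mem_univ i
  have hju : j ∈ (univ : Finset (Fin n)) := mem_univ j
  have hQ : ∏ l ∈ (univ.erase i).erase j, z l ^ (dtMove i j κ) l
      = ∏ l ∈ (univ.erase i).erase j, z l ^ κ l := by
    refine Finset.prod_congr rfl fun l hl => ?_
    rw [Finset.mem_erase, Finset.mem_erase] at hl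
    rw [dtMove_other hl.2.1 hl.1]
  rw [dt_prod3 hiu hju hij (fun l => z l ^ κ l),
    dt_prod3 hiu hju hij (fun l => z l ^ (dtMove i j κ) l), hQ,
    dtMove_i hij, dtMove_j hij]
  have h1 : z i ^ κ i = z i * z i ^ (κ i - 1) := by
    rw [← pow_succ']
    congr 1
    omega
  rw [pow_succ, h1]
  ring

lemma dt_swap (z : Fin n → ℝ) (P : Finset (Fin n)) {i j : Fin n}
    (hi : i ∈ P) (hj : j ∈ P) (m : ℕ) (f : ℕ → ℝ) :
    z j * ∑ κ ∈ piAntidiag (univ : Finset (Fin n)) m,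
        (κ i : ℝ) * f (∑ l ∈ P, κ l) * (Nat.multinomial univ κ : ℝ) * ∏ l, z l ^ κ l
      = z i * ∑ κ ∈ piAntidiag (univ : Finset (Fin n)) m,
        (κ j : ℝ) * f (∑ l ∈ P, κ l) * (Nat.multinomial univ κ : ℝ) * ∏ l, z l ^ κ l := by
  rcases eq_or_ne i j with rfl | hij
  · rfl
  have L : z j * ∑ κ ∈ piAntidiag (univ : Finset (Fin n)) m,
        (κ i : ℝ) * f (∑ l ∈ P, κ l) * (Nat.multinomial univ κ : ℝ) * ∏ l, z l ^ κ l
      = ∑ κ ∈ (piAntidiag (univ : Finset (Fin n)) m).filter (fun κ => κ i ≠ 0),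
        z j * ((κ i : ℝ) * f (∑ l ∈ P, κ l) * (Nat.multinomial univ κ : ℝ) * ∏ l, z l ^ κ l) := by
    rw [Finset.mul_sum]
    refine (Finset.sum_filter_of_ne ?_).symm
    intro κ _ hne h0
    exact hne (by simp [h0])
  have R : z i * ∑ κ ∈ piAntidiag (univ : Finset (Fin n)) m,
        (κ j : ℝ) * f (∑ l ∈ P, κ l) * (Nat.multinomial univ κ : ℝ) * ∏ l, z l ^ κ l
      = ∑ κ ∈ (piAntidiag (univ : Finset (Fin n)) m).filter (fun κ => κ j ≠ 0),
        z i * ((κ j : ℝ) * f (∑ l ∈ P, κ l) * (Nat.multinomial univ κ : ℝ) * ∏ l, z l ^ κ l) := by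
    rw [Finset.mul_sum]
    refine (Finset.sum_filter_of_ne ?_).symm
    intro κ _ hne h0
    exact hne (by simp [h0])
  rw [L, R]
  refine Finset.sum_nbij' (dtMove i j) (dtMove j i) ?_ ?_ ?_ ?_ ?_
  · intro κ hκ
    rw [Finset.mem_filter, mem_piAntidiag] at hκ ⊢
    refine ⟨⟨?_, fun _ _ => mem_univ _⟩, ?_⟩
    · rw [dtMove_sum (mem_univ i) (mem_univ j) hij hκ.2]
      exact hκ.1.1
    · rw [dtMove_j hij]; omega
  · intro κ hκ
    rw [Finset.mem_filter, mem_piAntidiag] at hκ ⊢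
    refine ⟨⟨?_, fun _ _ => mem_univ _⟩, ?_⟩
    · rw [dtMove_sum (mem_univ j) (mem_univ i) hij.symm hκ.2]
      exact hκ.1.1
    · rw [dtMove_j hij.symm]; omega
  · intro κ hκ
    rw [Finset.mem_filter] at hκ
    exact dtMove_inv hij hκ.2
  · intro κ hκ
    rw [Finset.mem_filter] at hκ
    exact dtMove_inv hij.symm hκ.2
  · intro κ hκ
    rw [Finset.mem_filter] at hκ
    have hsP : ∑ l ∈ P, dtMove i j κ l = ∑ l ∈ P, κ l := dtMove_sum hi hj hij hκ.2
    have hj' : ((dtMove i j κ) j : ℝ) = (κ j : ℝ) + 1 := by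
      rw [dtMove_j hij]; push_cast; ring
    have A := dtMove_mult hij hκ.2
    have B := dtMove_pow z hij hκ.2
    calc z j * ((κ i : ℝ) * f (∑ l ∈ P, κ l) * (Nat.multinomial univ κ : ℝ) * ∏ l, z l ^ κ l)
        = ((κ i : ℝ) * (Nat.multinomial univ κ : ℝ)) * f (∑ l ∈ P, κ l)
            * (z j * ∏ l, z l ^ κ l) := by ring
      _ = (((κ j : ℝ) + 1) * (Nat.multinomial univ (dtMove i j κ) : ℝ)) * f (∑ l ∈ P, κ l)
            * (z i * ∏ l, z l ^ (dtMove i j κ) l) := by rw [A, B]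
      _ = z i * (((dtMove i j κ) j : ℝ) * f (∑ l ∈ P, dtMove i j κ l)
            * (Nat.multinomial univ (dtMove i j κ) : ℝ) * ∏ l, z l ^ (dtMove i j κ) l) := by
          rw [hj', hsP]; ring

lemma dt_per_m (z : Fin n → ℝ) (P : Finset (Fin n)) {i : Fin n} (hi : i ∈ P)
    (hZ : ∑ l ∈ P, z l ≠ 0) (m : ℕ) :
    ∑ κ ∈ piAntidiag (univ : Finset (Fin n)) m,
      (if ∑ l ∈ P, κ l = 0 then z i / ∑ l ∈ P, z l
        else (κ i : ℝ) / ∑ l ∈ P, (κ l : ℝ)) *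
        ((Nat.multinomial univ κ : ℝ) * ∏ l, z l ^ κ l)
      = z i / (∑ l ∈ P, z l) * (∑ l, z l) ^ m := by
  set f : ℕ → ℝ := fun t => ((t : ℝ))⁻¹ with hf
  set g : (Fin n → ℕ) → ℝ := fun κ => (Nat.multinomial univ κ : ℝ) * ∏ l, z l ^ κ l with hg
  set T0 : ℝ := ∑ κ ∈ piAntidiag (univ : Finset (Fin n)) m,
      (if ∑ l ∈ P, κ l = 0 then g κ else 0) with hT0
  set B : Fin n → ℝ := fun j => ∑ κ ∈ piAntidiag (univ : Finset (Fin n)) m,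
      (κ j : ℝ) * f (∑ l ∈ P, κ l) * (Nat.multinomial univ κ : ℝ) * ∏ l, z l ^ κ l with hB
  have hzero : ∀ κ : Fin n → ℕ, ∑ l ∈ P, κ l = 0 → ∀ l ∈ P, κ l = 0 := fun κ h =>
    (Finset.sum_eq_zero_iff).mp h
  have hcast : ∀ κ : Fin n → ℕ, ∑ l ∈ P, (κ l : ℝ) = ((∑ l ∈ P, κ l : ℕ) : ℝ) := by
    intro κ; push_cast; rfl
  have step1 : ∑ κ ∈ piAntidiag (univ : Finset (Fin n)) m,
      (if ∑ l ∈ P, κ l = 0 then z i / ∑ l ∈ P, z l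
        else (κ i : ℝ) / ∑ l ∈ P, (κ l : ℝ)) * g κ
      = z i / (∑ l ∈ P, z l) * T0 + B i := by
    rw [hT0, Finset.mul_sum, hB, ← Finset.sum_add_distrib]
    refine Finset.sum_congr rfl fun κ _ => ?_
    by_cases hc : ∑ l ∈ P, κ l = 0
    · have hκi : κ i = 0 := hzero κ hc i hi
      rw [if_pos hc, if_pos hc, hκi]
      simp [hg]
    · rw [if_neg hc, if_neg hc, hcast κ, hf]
      have : ((∑ l ∈ P, κ l : ℕ) : ℝ) ≠ 0 := by
        exact_mod_cast hc
      field_simp [hg]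
      ring
  have step2 : (∑ l ∈ P, z l) * B i = z i * ((∑ l, z l) ^ m - T0) := by
    have h2 : ∀ j ∈ P, z j * B i = z i * B j := fun j hj => dt_swap z P hi hj m f
    have hsplit : ∀ κ ∈ piAntidiag (univ : Finset (Fin n)) m,
        ∑ j ∈ P, ((κ j : ℝ) * f (∑ l ∈ P, κ l) * (Nat.multinomial univ κ : ℝ) * ∏ l, z l ^ κ l)
          = g κ - (if ∑ l ∈ P, κ l = 0 then g κ else 0) := by
      intro κ _
      rw [← Finset.sum_mul, ← Finset.sum_mul, ← Finset.sum_mul]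
      by_cases hc : ∑ l ∈ P, κ l = 0
      · have : ∑ j ∈ P, (κ j : ℝ) = 0 := by
          rw [hcast κ, hc]; norm_num
        rw [this, if_pos hc]
        simp
      · have hne : ((∑ l ∈ P, κ l : ℕ) : ℝ) ≠ 0 := by exact_mod_cast hc
        rw [if_neg hc, hcast κ, hf]
        rw [mul_inv_cancel₀ hne]
        rw [hg]; ring
    calc (∑ l ∈ P, z l) * B i = ∑ j ∈ P, z j * B i := Finset.sum_mul _ _ _
      _ = ∑ j ∈ P, z i * B j := Finset.sum_congr rfl h2
      _ = z i * ∑ j ∈ P, B j := (Finset.mul_sum _ _ _).symm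
      _ = z i * ((∑ l, z l) ^ m - T0) := by
          congr 1
          rw [hB, Finset.sum_comm, Finset.sum_congr rfl hsplit, Finset.sum_sub_distrib,
            ← hT0, Finset.sum_pow_eq_sum_piAntidiag]
  have hBi : B i = z i * ((∑ l, z l) ^ m - T0) / (∑ l ∈ P, z l) := by
    rw [eq_div_iff hZ, mul_comm _ (∑ l ∈ P, z l)] at *
    linarith [step2]
  rw [step1, hBi]
  field_simp
  ring

lemma dt_combine (σ : Polynomial ℝ) (s : ℝ) (z : Fin n → ℝ) {i : Fin n}
    (hzi : 0 < z i) (m : ℕ) {κ : Fin n → ℕ}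
    (hκ : κ ∈ piAntidiag (univ : Finset (Fin n)) (m + 1)) :
    ((if univ.filter (fun j => κ j ≠ 0) = {i} then taylorEffect σ s z κ else 0)
      + (if univ.filter (fun j => κ j ≠ 0)
            ∈ (univ : Finset (Fin n)).powerset.filter (fun S => 1 < S.card ∧ i ∈ S)
          then ((κ i : ℝ) / ∑ j ∈ univ.filter (fun j => 0 < z j), (κ j : ℝ)) *
            taylorEffect σ s z κ else 0)
      + (if univ.filter (fun j => κ j ≠ 0)
            ∈ (univ.filter (fun j => z j ≤ 0)).powerset.filter (fun S => S.Nonempty)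
          then (z i / ∑ j ∈ univ.filter (fun j => 0 < z j), z j) *
            taylorEffect σ s z κ else 0))
    = ((Polynomial.derivative^[m + 1] σ).eval s / ((m + 1).factorial : ℝ)) *
      ((if ∑ l ∈ univ.filter (fun j => 0 < z j), κ l = 0
          then z i / ∑ l ∈ univ.filter (fun j => 0 < z j), z l
          else (κ i : ℝ) / ∑ l ∈ univ.filter (fun j => 0 < z j), (κ l : ℝ)) *
        ((Nat.multinomial univ κ : ℝ) * ∏ l, z l ^ κ l)) := by
  have hm : ∑ j, κ j = m + 1 := (mem_piAntidiag.mp hκ).1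
  have hTE : taylorEffect σ s z κ
      = ((Polynomial.derivative^[m + 1] σ).eval s / ((m + 1).factorial : ℝ)) *
        ((Nat.multinomial univ κ : ℝ) * ∏ l, z l ^ κ l) := by
    unfold taylorEffect
    rw [hm, mul_assoc]
  set P : Finset (Fin n) := univ.filter (fun j => 0 < z j) with hPdef
  have hi : i ∈ P := mem_filter.mpr ⟨mem_univ i, hzi⟩
  set T : Finset (Fin n) := univ.filter (fun j => κ j ≠ 0) with hTdef
  have hmemT : ∀ l, l ∈ T ↔ κ l ≠ 0 := fun l => by
    rw [hTdef, mem_filter]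
    simp
  have hcast : ∑ l ∈ P, (κ l : ℝ) = ((∑ l ∈ P, κ l : ℕ) : ℝ) := by push_cast; rfl
  by_cases hc : ∑ l ∈ P, κ l = 0
  · -- support misses P entirely; only the third class fires
    have hall : ∀ l ∈ P, κ l = 0 := Finset.sum_eq_zero_iff.mp hc
    have hκi : κ i = 0 := hall i hi
    have hiT : i ∉ T := fun h => (hmemT i).mp h hκi
    have h1 : T ≠ {i} := fun h => hiT (h ▸ Finset.mem_singleton_self i)
    have h2 : T ∉ (univ : Finset (Fin n)).powerset.filter (fun S => 1 < S.card ∧ i ∈ S) :=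
      fun h => hiT (Finset.mem_filter.mp h).2.2
    have hTne : T.Nonempty := by
      by_contra h
      rw [Finset.not_nonempty_iff_eq_empty] at h
      have : ∀ l, κ l = 0 := fun l => by
        by_contra hl
        exact Finset.notMem_empty l (h ▸ (hmemT l).mpr hl)
      rw [Finset.sum_congr rfl (fun l _ => this l)] at hm
      simp at hm
    have h3 : T ∈ (univ.filter (fun j => z j ≤ 0)).powerset.filter (fun S => S.Nonempty) := by
      refine Finset.mem_filter.mpr ⟨Finset.mem_powerset.mpr ?_, hTne⟩
      intro l hl
      refine Finset.mem_filter.mpr ⟨mem_univ l, ?_⟩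
      by_contra hzl
      push_neg at hzl
      exact (hmemT l).mp hl (hall l (mem_filter.mpr ⟨mem_univ l, hzl⟩))
    rw [if_neg h1, if_neg h2, if_pos h3, if_pos hc, hTE]
    ring
  · -- support meets P
    have h3 : T ∉ (univ.filter (fun j => z j ≤ 0)).powerset.filter (fun S => S.Nonempty) := by
      intro h
      have hsub := Finset.mem_powerset.mp (Finset.mem_filter.mp h).1
      apply hc
      refine Finset.sum_eq_zero fun l hl => ?_
      by_contra hκl
      have : l ∈ univ.filter (fun j => z j ≤ 0) := hsub ((hmemT l).mpr hκl)
      exact absurd (mem_filter.mp hl).2 (not_lt.mpr (mem_filter.mp this).2)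
    rw [if_neg hc, if_neg h3]
    by_cases hTi : T = {i}
    · have h2 : T ∉ (univ : Finset (Fin n)).powerset.filter (fun S => 1 < S.card ∧ i ∈ S) := by
        rw [hTi]
        intro h
        have := (Finset.mem_filter.mp h).2.1
        simp at this
      have hκi : κ i ≠ 0 := (hmemT i).mp (hTi ▸ Finset.mem_singleton_self i)
      have hsum : ∑ l ∈ P, κ l = κ i := by
        refine Finset.sum_eq_single_of_mem i hi fun l _ hne => ?_
        by_contra hκl
        have : l ∈ T := (hmemT l).mpr hκl
        rw [hTi, Finset.mem_singleton] at this
        exact hne this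
      have hone : (κ i : ℝ) / ∑ l ∈ P, (κ l : ℝ) = 1 := by
        rw [hcast, hsum, div_self (by exact_mod_cast hκi)]
      rw [if_pos hTi, if_neg h2, hone, hTE]
      ring
    · by_cases hiT : i ∈ T
      · have h2 : T ∈ (univ : Finset (Fin n)).powerset.filter (fun S => 1 < S.card ∧ i ∈ S) := by
          refine Finset.mem_filter.mpr ⟨Finset.mem_powerset.mpr (Finset.subset_univ T), ?_, hiT⟩
          rw [Finset.one_lt_card]
          have : ∃ l ∈ T, l ≠ i := by
            by_contra h
            push_neg at h
            exact hTi (Finset.eq_singleton_iff_unique_mem.mpr ⟨hiT, h⟩)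
          obtain ⟨l, hl, hlne⟩ := this
          exact ⟨l, hl, i, hiT, hlne⟩
        rw [if_neg hTi, if_pos h2, hTE]
        ring
      · have hκi : κ i = 0 := by
          by_contra h
          exact hiT ((hmemT i).mpr h)
        have h2 : T ∉ (univ : Finset (Fin n)).powerset.filter (fun S => 1 < S.card ∧ i ∈ S) :=
          fun h => hiT (Finset.mem_filter.mp h).2.2
        rw [if_neg hTi, if_neg h2, hκi]
        simp

end

/-- Deep Taylor.  For a polynomial activation `σ`, with
`y = σ(∑ⱼ zⱼ + s)`, `ỹ = σ(s)`, `N⁺ = {j : zⱼ > 0}`, `N⁻ = {j : zⱼ ≤ 0}` and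
`∑_{j∈N⁺} zⱼ ≠ 0`: for every `i ∈ N⁺` the Deep Taylor attribution decomposes into
Taylor independent and interaction effects with the stated allocation ratios, and the
attribution of every `i ∈ N⁻` is `0`. -/
theorem deep_taylor {n : ℕ} (hn : 1 ≤ n) (σ : Polynomial ℝ) (s : ℝ)
    (z : Fin n → ℝ)
    (hNp : ∑ j ∈ univ.filter (fun j => 0 < z j), z j ≠ 0) :
    (∀ i : Fin n, 0 < z i →
      deepTaylorAttr σ s z i
        = (∑' κ : Fin n → ℕ,
              if univ.filter (fun j => κ j ≠ 0) = {i} then taylorEffect σ s z κ else 0)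
        + (∑ S ∈ (univ : Finset (Fin n)).powerset.filter (fun S => 1 < S.card ∧ i ∈ S),
            ∑' κ : Fin n → ℕ,
              if univ.filter (fun j => κ j ≠ 0) = S then
                ((κ i : ℝ) / ∑ j ∈ univ.filter (fun j => 0 < z j), (κ j : ℝ)) *
                  taylorEffect σ s z κ
              else 0)
        + (∑ S ∈ (univ.filter (fun j => z j ≤ 0)).powerset.filter (fun S => S.Nonempty),
            ∑' κ : Fin n → ℕ,
              if univ.filter (fun j => κ j ≠ 0) = S then
                (z i / ∑ j ∈ univ.filter (fun j => 0 < z j), z j) *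
                  taylorEffect σ s z κ
              else 0)) ∧
    (∀ i : Fin n, z i ≤ 0 → deepTaylorAttr σ s z i = 0) := by
  classical
  refine ⟨fun i hzi => ?_, fun i hzi => by rw [deepTaylorAttr, if_neg (not_lt.mpr hzi)]⟩
  have hi : i ∈ univ.filter (fun j => 0 < z j) := mem_filter.mpr ⟨mem_univ i, hzi⟩
  set D := σ.natDegree with hDdef
  set sD : Finset (Fin n → ℕ) :=
    (Finset.range (D + 1)).biUnion (fun m => piAntidiag univ m) with hsD
  have hout : ∀ κ : Fin n → ℕ, κ ∉ sD → taylorEffect σ s z κ = 0 := by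
    intro κ hκ
    have hlt : D < ∑ j, κ j := by
      by_contra h
      push_neg at h
      exact hκ (Finset.mem_biUnion.mpr ⟨∑ j, κ j, Finset.mem_range.mpr (by omega),
        mem_piAntidiag.mpr ⟨rfl, fun _ _ => mem_univ _⟩⟩)
    unfold taylorEffect
    rw [Polynomial.iterate_derivative_eq_zero hlt]
    simp
  have t1 : (∑' κ : Fin n → ℕ,
        if univ.filter (fun j => κ j ≠ 0) = {i} then taylorEffect σ s z κ else 0)
      = ∑ κ ∈ sD, (if univ.filter (fun j => κ j ≠ 0) = {i} then taylorEffect σ s z κ else 0) :=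
    tsum_eq_sum (fun κ hκ => by rw [hout κ hκ]; simp)
  have t2 : ∀ S : Finset (Fin n), (∑' κ : Fin n → ℕ,
        if univ.filter (fun j => κ j ≠ 0) = S then
          ((κ i : ℝ) / ∑ j ∈ univ.filter (fun j => 0 < z j), (κ j : ℝ)) * taylorEffect σ s z κ
        else 0)
      = ∑ κ ∈ sD, (if univ.filter (fun j => κ j ≠ 0) = S then
          ((κ i : ℝ) / ∑ j ∈ univ.filter (fun j => 0 < z j), (κ j : ℝ)) * taylorEffect σ s z κ
        else 0) :=
    fun S => tsum_eq_sum (fun κ hκ => by rw [hout κ hκ]; simp)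
  have t3 : ∀ S : Finset (Fin n), (∑' κ : Fin n → ℕ,
        if univ.filter (fun j => κ j ≠ 0) = S then
          (z i / ∑ j ∈ univ.filter (fun j => 0 < z j), z j) * taylorEffect σ s z κ
        else 0)
      = ∑ κ ∈ sD, (if univ.filter (fun j => κ j ≠ 0) = S then
          (z i / ∑ j ∈ univ.filter (fun j => 0 < z j), z j) * taylorEffect σ s z κ
        else 0) :=
    fun S => tsum_eq_sum (fun κ hκ => by rw [hout κ hκ]; simp)
  rw [t1, Finset.sum_congr rfl (fun S _ => t2 S), Finset.sum_congr rfl (fun S _ => t3 S)]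
  have u2 : ∑ S ∈ (univ : Finset (Fin n)).powerset.filter (fun S => 1 < S.card ∧ i ∈ S),
        ∑ κ ∈ sD, (if univ.filter (fun j => κ j ≠ 0) = S then
          ((κ i : ℝ) / ∑ j ∈ univ.filter (fun j => 0 < z j), (κ j : ℝ)) * taylorEffect σ s z κ
        else 0)
      = ∑ κ ∈ sD, (if univ.filter (fun j => κ j ≠ 0)
            ∈ (univ : Finset (Fin n)).powerset.filter (fun S => 1 < S.card ∧ i ∈ S) then
          ((κ i : ℝ) / ∑ j ∈ univ.filter (fun j => 0 < z j), (κ j : ℝ)) * taylorEffect σ s z κ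
        else 0) := by
    rw [Finset.sum_comm]
    exact Finset.sum_congr rfl fun κ _ => Finset.sum_ite_eq _ _ _
  have u3 : ∑ S ∈ (univ.filter (fun j => z j ≤ 0)).powerset.filter (fun S => S.Nonempty),
        ∑ κ ∈ sD, (if univ.filter (fun j => κ j ≠ 0) = S then
          (z i / ∑ j ∈ univ.filter (fun j => 0 < z j), z j) * taylorEffect σ s z κ
        else 0)
      = ∑ κ ∈ sD, (if univ.filter (fun j => κ j ≠ 0)
            ∈ (univ.filter (fun j => z j ≤ 0)).powerset.filter (fun S => S.Nonempty) then
          (z i / ∑ j ∈ univ.filter (fun j => 0 < z j), z j) * taylorEffect σ s z κ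
        else 0) := by
    rw [Finset.sum_comm]
    exact Finset.sum_congr rfl fun κ _ => Finset.sum_ite_eq _ _ _
  rw [u2, u3, ← Finset.sum_add_distrib, ← Finset.sum_add_distrib]
  have hdisj : (↑(Finset.range (D + 1)) : Set ℕ).PairwiseDisjoint
      (fun m => piAntidiag (univ : Finset (Fin n)) m) := by
    intro a _ b _ hab
    rw [Function.onFun, Finset.disjoint_left]
    intro κ hκa hκb
    exact hab ((mem_piAntidiag.mp hκa).1.symm.trans (mem_piAntidiag.mp hκb).1)
  rw [hsD, Finset.sum_biUnion hdisj, Finset.sum_range_succ']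
  rw [show (piAntidiag (univ : Finset (Fin n)) 0) = {0} from piAntidiag_zero _,
    Finset.sum_singleton]
  have hsupp0 : univ.filter (fun j => (0 : Fin n → ℕ) j ≠ 0) = (∅ : Finset (Fin n)) := by
    simp
  have h01 : (∅ : Finset (Fin n)) ≠ {i} := by
    intro h
    exact Finset.notMem_empty i (h ▸ Finset.mem_singleton_self i)
  have h02 : (∅ : Finset (Fin n)) ∉
      (univ : Finset (Fin n)).powerset.filter (fun S => 1 < S.card ∧ i ∈ S) := by
    intro h
    exact Finset.notMem_empty i (Finset.mem_filter.mp h).2.2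
  have h03 : (∅ : Finset (Fin n)) ∉
      (univ.filter (fun j => z j ≤ 0)).powerset.filter (fun S => S.Nonempty) := by
    intro h
    exact Finset.not_nonempty_empty (Finset.mem_filter.mp h).2
  rw [hsupp0, if_neg h01, if_neg h02, if_neg h03]
  have hper : ∀ m : ℕ, ∑ κ ∈ piAntidiag (univ : Finset (Fin n)) (m + 1),
        ((if univ.filter (fun j => κ j ≠ 0) = {i} then taylorEffect σ s z κ else 0)
          + (if univ.filter (fun j => κ j ≠ 0)
                ∈ (univ : Finset (Fin n)).powerset.filter (fun S => 1 < S.card ∧ i ∈ S) then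
              ((κ i : ℝ) / ∑ j ∈ univ.filter (fun j => 0 < z j), (κ j : ℝ)) *
                taylorEffect σ s z κ else 0)
          + (if univ.filter (fun j => κ j ≠ 0)
                ∈ (univ.filter (fun j => z j ≤ 0)).powerset.filter (fun S => S.Nonempty) then
              (z i / ∑ j ∈ univ.filter (fun j => 0 < z j), z j) *
                taylorEffect σ s z κ else 0))
      = ((Polynomial.derivative^[m + 1] σ).eval s / ((m + 1).factorial : ℝ)) *
          (z i / (∑ l ∈ univ.filter (fun j => 0 < z j), z l) * (∑ l, z l) ^ (m + 1)) := by
    intro m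
    rw [Finset.sum_congr rfl (fun κ hκ => dt_combine σ s z hzi m hκ), ← Finset.mul_sum,
      dt_per_m z (univ.filter (fun j => 0 < z j)) hi hNp (m + 1)]
  rw [Finset.sum_congr rfl (fun m _ => hper m)]
  rw [deepTaylorAttr, if_pos hzi, dt_eval_add σ s (∑ j, z j), Finset.sum_range_succ']
  simp only [Function.iterate_zero, id_eq, Nat.factorial_zero, Nat.cast_one, pow_zero,
    div_one, mul_one, add_zero, zero_add, add_sub_cancel_right]
  rw [Finset.mul_sum]
  exact Finset.sum_congr rfl fun m _ => by ring
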